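/- arXiv:2103.15703 — 2 statements merged into one kernel-verified Lean document; each statement's English description precedes it below -/
import Mathlib

section
/- Let G be a directed graph, S a set of vertices, x ∈ S, and P a path from x to a vertex y. Let G' be the graph obtained from G by reversing all edges along P. If y ∈ S, then the number of edges from S to V∖S in G' equals the number of edges from S to V∖S in G; if y ∉ S, then the number of edges from S to V∖S in G' equals one less than that number in G. -/
lemma zip_tail_nodup {V : Type*} : ∀ (l : List V), l.Nodup → (l.zip l.tail).Nodup
  | [], _ => by simp
  | [a], _ => by simp
  | a :: c :: rest, h => by
      rw [List.tail_cons, List.zip_cons_cons, List.nodup_cons]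
      refine ⟨fun hm => ?_, zip_tail_nodup (c :: rest) h.of_cons⟩
      have := (List.of_mem_zip hm).1
      exact (List.nodup_cons.mp h).1 this

lemma zip_tail_mem {V : Type*} {p : V → V → Prop} :
    ∀ (l : List V), l.Chain' p → ∀ e ∈ l.zip l.tail, p e.1 e.2
  | [], _, e, he => by simp at he
  | [a], _, e, he => by simp at he
  | a :: c :: rest, h, e, he => by
      rw [List.tail_cons, List.zip_cons_cons, List.mem_cons] at he
      rcases he with rfl | he
      · exact (List.isChain_cons_cons.mp h).1
      · exact zip_tail_mem (c :: rest) (List.isChain_cons_cons.mp h).2 e he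

lemma cross_count {V : Type*} [DecidableEq V] (S : Finset V) :
    ∀ (l : List V) (a b : V), l.head? = some a → l.getLast? = some b →
    Multiset.card (Multiset.filter (fun e : V × V => e.1 ∈ S ∧ e.2 ∉ S) ↑(l.zip l.tail))
      + (if b ∈ S then 1 else 0)
    = Multiset.card (Multiset.filter (fun e : V × V => e.2 ∈ S ∧ e.1 ∉ S) ↑(l.zip l.tail))
      + (if a ∈ S then 1 else 0)
  | [], a, b => by simp
  | [a'], a, b => by
      intro ha hb
      simp only [List.head?_cons, Option.some.injEq] at ha
      simp only [List.getLast?_singleton, Option.some.injEq] at hb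
      subst ha; subst hb; simp
  | a' :: c :: rest, a, b => by
      intro ha hb
      simp only [List.head?_cons, Option.some.injEq] at ha
      subst ha
      rw [List.getLast?_cons_cons] at hb
      have ih := cross_count S (c :: rest) c b rfl hb
      rw [List.tail_cons, List.zip_cons_cons]
      rw [show ((((a', c) :: (c :: rest).zip rest) : List (V × V)) : Multiset (V × V))
        = (a', c) ::ₘ ↑((c :: rest).zip rest) from rfl]
      rw [Multiset.filter_cons, Multiset.filter_cons]
      by_cases haS : a' ∈ S <;> by_cases hcS : c ∈ S <;>
        simp_all <;> omega


/-- Path reversal observation. `G` is a finite directed (multi)graph given as a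
multiset of directed edges, `S` a vertex set containing `x`, and `P` a directed path
(list of distinct vertices, consecutive pairs edges of `G`) from `x` to `y`. `G'` is obtained
by reversing all edges along `P`. Then the number of edges from `S` to `V \ S` is unchanged
if `y ∈ S`, and drops by exactly one if `y ∉ S`. -/
theorem stmt0 {V : Type*} [DecidableEq V]
    (G : Multiset (V × V)) (S : Finset V) (x y : V) (P : List V)
    (hx : x ∈ S)
    (hchain : P.Chain' (fun u v => (u, v) ∈ G))
    (hhead : P.head? = some x)
    (hlast : P.getLast? = some y)
    (hnodup : P.Nodup)
    (G' : Multiset (V × V))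
    (hG' : G' = (G - ↑(P.zip P.tail))
        + ((↑(P.zip P.tail) : Multiset (V × V)).map Prod.swap)) :
    (y ∈ S → Multiset.card (G'.filter fun e => e.1 ∈ S ∧ e.2 ∉ S)
        = Multiset.card (G.filter fun e => e.1 ∈ S ∧ e.2 ∉ S)) ∧
    (y ∉ S → Multiset.card (G'.filter fun e => e.1 ∈ S ∧ e.2 ∉ S)
        = Multiset.card (G.filter fun e => e.1 ∈ S ∧ e.2 ∉ S) - 1) := by
  have hLnodup : (↑(P.zip P.tail) : Multiset (V × V)).Nodup :=
    Multiset.coe_nodup.mpr (zip_tail_nodup P hnodup)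
  have hle : (↑(P.zip P.tail) : Multiset (V × V)) ≤ G := by
    rw [Multiset.le_iff_count]
    intro e
    by_cases he : e ∈ (↑(P.zip P.tail) : Multiset (V × V))
    · have h1 : (↑(P.zip P.tail) : Multiset (V × V)).count e ≤ 1 :=
        Multiset.nodup_iff_count_le_one.mp hLnodup e
      have h2 : 1 ≤ G.count e := by
        rw [Multiset.one_le_count_iff_mem]
        have := zip_tail_mem P hchain e (by simpa using he)
        simpa using this
      omega
    · simp [Multiset.count_eq_zero_of_notMem he]
  have hG : G = (G - ↑(P.zip P.tail)) + ↑(P.zip P.tail) := (tsub_add_cancel_of_le hle).symm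
  have cardG : Multiset.card (G.filter fun e => e.1 ∈ S ∧ e.2 ∉ S)
      = Multiset.card (((G - ↑(P.zip P.tail))).filter fun e => e.1 ∈ S ∧ e.2 ∉ S)
        + Multiset.card ((↑(P.zip P.tail) : Multiset (V × V)).filter fun e => e.1 ∈ S ∧ e.2 ∉ S) := by
    conv_lhs => rw [hG]
    rw [Multiset.filter_add, Multiset.card_add]
  have hswap : Multiset.card (((↑(P.zip P.tail) : Multiset (V × V)).map Prod.swap).filter
        fun e => e.1 ∈ S ∧ e.2 ∉ S)
      = Multiset.card ((↑(P.zip P.tail) : Multiset (V × V)).filter fun e => e.2 ∈ S ∧ e.1 ∉ S) := by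
    rw [Multiset.filter_map, Multiset.card_map]
    congr 1
  have cardG' : Multiset.card (G'.filter fun e => e.1 ∈ S ∧ e.2 ∉ S)
      = Multiset.card (((G - ↑(P.zip P.tail))).filter fun e => e.1 ∈ S ∧ e.2 ∉ S)
        + Multiset.card ((↑(P.zip P.tail) : Multiset (V × V)).filter fun e => e.2 ∈ S ∧ e.1 ∉ S) := by
    rw [hG', Multiset.filter_add, Multiset.card_add, hswap]
  have key := cross_count S P x y hhead hlast
  rw [if_pos hx] at key
  constructor
  · intro hy
    rw [if_pos hy] at key
    omega
  · intro hy
    rw [if_neg hy] at key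
    omega
end

section
/- Let G be a directed graph, x ∈ V, and k ≥ 1. Suppose there is no set S with x ∈ S and |E(S, V∖S)| < k. Then for every vertex y ≠ x reachable from x—in fact for every vertex y—there exist at least k edge-disjoint paths from x to y. Conversely, if |E(S, V∖S)| ≤ k−1 for some S containing x but not y, then there are at most k−1 edge-disjoint x→y paths. -/
/-- A directed path from `s` to `t`: a nonempty list of distinct vertices, consecutive
pairs related by `Adj`, starting at `s` and ending at `t`. -/
def IsDiPath {α : Type*} (Adj : α → α → Prop) (s t : α) (p : List α) : Prop :=
  p ≠ [] ∧ p.Chain' Adj ∧ p.head? = some s ∧ p.getLast? = some t ∧ p.Nodup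

/-- The (directed) edges of a path given as a list of vertices. -/
def pathEdges {α : Type*} (p : List α) : List (α × α) := p.zip p.tail

set_option linter.unusedSectionVars false
set_option linter.unusedVariables false

namespace Stmt17
section lists

variable {α : Type*}

@[simp] lemma pathEdges_nil : pathEdges ([] : List α) = [] := rfl
@[simp] lemma pathEdges_single (a : α) : pathEdges [a] = [] := rfl
@[simp] lemma pathEdges_cons_cons (a b : α) (t : List α) :
    pathEdges (a :: b :: t) = (a, b) :: pathEdges (b :: t) := rfl

lemma mem_of_mem_pathEdges {p : List α} {u v : α} (h : (u, v) ∈ pathEdges p) :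
    u ∈ p ∧ v ∈ p := by
  have := List.of_mem_zip h
  exact ⟨this.1, List.mem_of_mem_tail this.2⟩

lemma chain'_of_pathEdges {R : α → α → Prop} :
    ∀ {p : List α}, p.Chain' R → ∀ q ∈ pathEdges p, R q.1 q.2
  | [], _, q, hq => by simp at hq
  | [a], _, q, hq => by simp at hq
  | a :: b :: t, hc, q, hq => by
    rw [pathEdges_cons_cons, List.mem_cons] at hq
    rw [List.Chain', List.isChain_cons_cons] at hc
    rcases hq with rfl | hq
    · exact hc.1
    · exact chain'_of_pathEdges hc.2 q hq

lemma pathEdges_nodup : ∀ {p : List α}, p.Nodup → (pathEdges p).Nodup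
  | [], _ => by simp
  | [a], _ => by simp
  | a :: b :: t, h => by
    rw [pathEdges_cons_cons, List.nodup_cons]
    refine ⟨fun hmem => ?_, pathEdges_nodup h.of_cons⟩
    exact (List.nodup_cons.mp h).1 (mem_of_mem_pathEdges hmem).1

lemma ne_of_mem_pathEdges : ∀ {p : List α}, p.Nodup → ∀ {u v : α},
    (u, v) ∈ pathEdges p → u ≠ v
  | [], _, u, v, h => by simp at h
  | [a], _, u, v, h => by simp at h
  | a :: b :: t, hn, u, v, h => by
    rw [pathEdges_cons_cons, List.mem_cons] at h
    rcases h with h | h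
    · obtain ⟨rfl, rfl⟩ := Prod.mk.injEq .. ▸ (Prod.ext_iff.mp h)
      rintro rfl
      exact (List.nodup_cons.mp hn).1 (by simp)
    · exact ne_of_mem_pathEdges hn.of_cons h

lemma not_mem_pathEdges_swap {p : List α} (hn : p.Nodup) {u v : α}
    (h : (u, v) ∈ pathEdges p) : (v, u) ∉ pathEdges p := by
  induction p with
  | nil => simp at h
  | cons a t ih =>
    match t, h with
    | b :: t, h =>
      rw [pathEdges_cons_cons, List.mem_cons] at h ⊢
      rintro (h' | h')
      · rcases h' with ⟨rfl, rfl⟩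
        rcases h with h | h
        · rcases h with ⟨rfl, rfl⟩
          exact (List.nodup_cons.mp hn).1 (by simp)
        · exact (List.nodup_cons.mp hn).1 (mem_of_mem_pathEdges h).2
      · rcases h with h | h
        · rcases h with ⟨rfl, rfl⟩
          exact (List.nodup_cons.mp hn).1 (mem_of_mem_pathEdges h').2
        · exact ih hn.of_cons h h'


variable {α : Type*}

lemma exists_nodup_chain_aux {R : α → α → Prop} :
    ∀ (n : ℕ) (p : List α), p.length ≤ n → p.Chain' R →
    ∃ q : List α, q.Chain' R ∧ q.head? = p.head? ∧ q.getLast? = p.getLast? ∧ q.Nodup := by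
  intro n
  induction n with
  | zero =>
    intro p hp _
    rw [Nat.le_zero, List.length_eq_zero_iff] at hp
    exact ⟨[], by simp [hp, List.Chain']⟩
  | succ n ih =>
    intro p hp hc
    by_cases hn : p.Nodup
    · exact ⟨p, hc, rfl, rfl, hn⟩
    · rw [List.nodup_iff_sublist] at hn
      push_neg at hn
      obtain ⟨a, ha⟩ := hn
      rw [List.cons_sublist_iff] at ha
      obtain ⟨r₁, r₂, rfl, ha1, ha2⟩ := ha
      have ha2' : a ∈ r₂ := (List.singleton_sublist.mp ha2)
      obtain ⟨s, t, rfl⟩ := List.append_of_mem ha1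
      obtain ⟨s', t', rfl⟩ := List.append_of_mem ha2'
      -- p = (s ++ a :: t) ++ (s' ++ a :: t')
      have hq : (s ++ a :: t').Chain' R := by
        rw [List.Chain', List.isChain_append]
        rw [List.Chain', List.append_assoc, List.isChain_append] at hc
        refine ⟨hc.1, ?_, ?_⟩
        · exact hc.2.1.suffix
            ((List.suffix_append s' (a :: t')).trans (List.suffix_append (a :: t) _))
        · intro z hz w hw
          simp only [List.head?_cons, Option.mem_def, Option.some.injEq] at hw
          subst hw
          exact hc.2.2 z hz a (by simp)
      have hlen : (s ++ a :: t').length ≤ n := by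
        have := hp
        simp only [List.length_append, List.length_cons] at this ⊢
        omega
      obtain ⟨q, hq1, hq2, hq3, hq4⟩ := ih _ hlen hq
      refine ⟨q, hq1, ?_, ?_, hq4⟩
      · rw [hq2]
        simp [List.head?_append, List.append_assoc]
      · rw [hq3]
        rw [List.getLast?_append_cons]
        rw [List.append_assoc, ← List.append_assoc (a :: t), ← List.append_assoc s,
          List.getLast?_append_cons]

lemma exists_nodup_chain {R : α → α → Prop} {x y : α} (h : Relation.ReflTransGen R x y) :
    ∃ p : List α, p ≠ [] ∧ p.Chain' R ∧ p.head? = some x ∧ p.getLast? = some y ∧ p.Nodup := by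
  obtain ⟨l, hl, hlast⟩ := List.exists_isChain_cons_of_relationReflTransGen h
  have hc : (x :: l).Chain' R := hl
  obtain ⟨q, hq1, hq2, hq3, hq4⟩ := exists_nodup_chain_aux (x :: l).length (x :: l) le_rfl hc
  have hqne : q ≠ [] := by
    intro h'
    rw [h'] at hq2
    simp at hq2
  refine ⟨q, hqne, hq1, by simpa using hq2, ?_, hq4⟩
  rw [hq3, List.getLast?_eq_getLast (by simp), hlast]



lemma telescope {α : Type*} (g : α → ℤ) :
    ∀ (t : List α) (a : α),
      ((pathEdges (a :: t)).map (fun q => g q.1 - g q.2)).sum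
        = g a - g ((a :: t).getLast (List.cons_ne_nil a t))
  | [], a => by simp [pathEdges]
  | b :: t, a => by
    rw [pathEdges_cons_cons, List.map_cons, List.sum_cons, telescope g t b,
      List.getLast_cons (List.cons_ne_nil b t)]
    ring

lemma list_sum_eq_single {β : Type*} [DecidableEq β] (L : List β) (hL : L.Nodup)
    (h : β → ℤ) (q₀ : β) (hz : ∀ q ∈ L, q ≠ q₀ → h q = 0) :
    (L.map h).sum = if q₀ ∈ L then h q₀ else 0 := by
  induction L with
  | nil => simp
  | cons a t ih =>
    rw [List.nodup_cons] at hL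
    rw [List.map_cons, List.sum_cons]
    by_cases ha : a = q₀
    · subst ha
      rw [if_pos (by simp)]
      have : (t.map h).sum = 0 := by
        rw [List.sum_eq_zero]
        intro z hz'
        rw [List.mem_map] at hz'
        obtain ⟨q, hq, rfl⟩ := hz'
        exact hz q (by simp [hq]) (fun hqa => hL.1 (hqa ▸ hq))
      rw [this, add_zero]
    · rw [hz a (by simp) ha, zero_add,
        ih hL.2 (fun q hq hq' => hz q (by simp [hq]) hq')]
      simp [List.mem_cons, Ne.symm ha, ha]


end lists
section flow

variable {V : Type*} [Fintype V] [DecidableEq V]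

/-- Net outflow of `f` at vertex `w`. -/
def netout (f : V × V → ℤ) (w : V) : ℤ := (∑ v, f (w, v)) - ∑ v, f (v, w)

lemma netout_add (f g : V × V → ℤ) (w : V) :
    netout (fun e => f e + g e) w = netout f w + netout g w := by
  simp [netout, Finset.sum_add_distrib]; ring

lemma netout_sub (f g : V × V → ℤ) (w : V) :
    netout (fun e => f e - g e) w = netout f w - netout g w := by
  simp [netout, Finset.sum_sub_distrib]; ring

lemma netout_zero (w : V) : netout (fun _ => (0 : ℤ)) w = 0 := by simp [netout]

lemma netout_single (a b : V) (w : V) :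
    netout (fun e => if e = (a, b) then (1 : ℤ) else 0) w
      = (if w = a then 1 else 0) - (if w = b then 1 else 0) := by
  unfold netout
  congr 1
  · by_cases h : w = a
    · subst h
      rw [Finset.sum_congr rfl (fun v _ => by
        show (if (w, v) = (w, b) then (1:ℤ) else 0) = if v = b then 1 else 0
        simp)]
      simp
    · rw [Finset.sum_eq_zero, if_neg h]
      intro v _
      simp [Prod.ext_iff, h]
  · by_cases h : w = b
    · subst h
      rw [Finset.sum_congr rfl (fun v _ => by
        show (if (v, w) = (a, w) then (1:ℤ) else 0) = if v = a then 1 else 0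
        simp [Prod.ext_iff])]
      simp
    · rw [Finset.sum_eq_zero, if_neg h]
      intro v _
      simp [Prod.ext_iff, h]

lemma netout_neg (f : V × V → ℤ) (w : V) :
    netout (fun e => -(f e)) w = - netout f w := by
  simp [netout]; ring

/-- netout of a pointwise list sum. -/
lemma netout_list_sum (L : List (V × V)) (g : V × V → (V × V → ℤ)) (w : V) :
    netout (fun e => (L.map (fun q => g q e)).sum) w
      = (L.map (fun q => netout (g q) w)).sum := by
  induction L with
  | nil => simpa using netout_zero w
  | cons a t ih =>
    simp only [List.map_cons, List.sum_cons]
    rw [netout_add (g a) (fun e => (t.map (fun q => g q e)).sum), ih]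

/-- Cut identity. -/
lemma sum_netout (f : V × V → ℤ) (S : Finset V) :
    ∑ w ∈ S, netout f w
      = (∑ e ∈ Finset.univ.filter (fun e : V × V => e.1 ∈ S ∧ e.2 ∉ S), f e)
        - ∑ e ∈ Finset.univ.filter (fun e : V × V => e.1 ∉ S ∧ e.2 ∈ S), f e := by
  have h1 : ∑ w ∈ S, ∑ v, f (w, v) = ∑ e ∈ S ×ˢ Finset.univ, f e := by
    rw [Finset.sum_product]
  have h2 : ∑ w ∈ S, ∑ v, f (v, w) = ∑ e ∈ Finset.univ ×ˢ S, f e := by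
    rw [Finset.sum_product]
    exact Finset.sum_comm
  have e1 : S ×ˢ Finset.univ = Finset.univ.filter (fun e : V × V => e.1 ∈ S) := by
    ext e; simp
  have e2 : Finset.univ ×ˢ S = Finset.univ.filter (fun e : V × V => e.2 ∈ S) := by
    ext e; simp
  have s1 : ∑ e ∈ Finset.univ.filter (fun e : V × V => e.1 ∈ S), f e
      = (∑ e ∈ Finset.univ.filter (fun e : V × V => e.1 ∈ S ∧ e.2 ∈ S), f e)
        + ∑ e ∈ Finset.univ.filter (fun e : V × V => e.1 ∈ S ∧ e.2 ∉ S), f e := by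
    rw [← Finset.sum_filter_add_sum_filter_not
      (Finset.univ.filter (fun e : V × V => e.1 ∈ S)) (fun e => e.2 ∈ S),
      Finset.filter_filter, Finset.filter_filter]
  have s2 : ∑ e ∈ Finset.univ.filter (fun e : V × V => e.2 ∈ S), f e
      = (∑ e ∈ Finset.univ.filter (fun e : V × V => e.1 ∈ S ∧ e.2 ∈ S), f e)
        + ∑ e ∈ Finset.univ.filter (fun e : V × V => e.1 ∉ S ∧ e.2 ∈ S), f e := by
    rw [← Finset.sum_filter_add_sum_filter_not
      (Finset.univ.filter (fun e : V × V => e.2 ∈ S)) (fun e => e.1 ∈ S),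
      Finset.filter_filter, Finset.filter_filter]
    congr 1
    · apply Finset.sum_congr _ (fun _ _ => rfl)
      apply Finset.filter_congr
      intro e _
      tauto
    · apply Finset.sum_congr _ (fun _ _ => rfl)
      apply Finset.filter_congr
      intro e _
      tauto
  unfold netout
  rw [Finset.sum_sub_distrib, h1, h2, e1, e2, s1, s2]
  ring


variable (Adj : V → V → Prop) [DecidableRel Adj] (x y : V)

/-- 0/1 capacities given by adjacency. -/
def cap : V × V → ℤ := fun e => if Adj e.1 e.2 then 1 else 0

lemma cap_nonneg (e : V × V) : 0 ≤ cap Adj e := by unfold cap; split <;> omega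

lemma cap_le_one (e : V × V) : cap Adj e ≤ 1 := by unfold cap; split <;> omega

/-- An integral flow from `x` to `y`. -/
def IsFlow (f : V × V → ℤ) : Prop :=
  (∀ e, 0 ≤ f e ∧ f e ≤ cap Adj e) ∧ ∀ w, w ≠ x → w ≠ y → netout f w = 0

lemma value_eq_cut {f : V × V → ℤ} (hf : IsFlow Adj x y f) {S : Finset V}
    (hx : x ∈ S) (hy : y ∉ S) :
    netout f x
      = (∑ e ∈ Finset.univ.filter (fun e : V × V => e.1 ∈ S ∧ e.2 ∉ S), f e)
        - ∑ e ∈ Finset.univ.filter (fun e : V × V => e.1 ∉ S ∧ e.2 ∈ S), f e := by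
  rw [← sum_netout f S]
  rw [Finset.sum_eq_single_of_mem x hx]
  intro w hw hwx
  exact hf.2 w hwx (fun h => hy (h ▸ hw))

/-- The residual relation of a flow. -/
def Res (f : V × V → ℤ) : V → V → Prop := fun u v =>
  (Adj u v ∧ f (u, v) < cap Adj (u, v)) ∨ 0 < f (v, u)

/-- Toggle of a flow along a residual edge. -/
def toggle (f : V × V → ℤ) (q e : V × V) : ℤ :=
  if 0 < f (q.2, q.1) then (if e = (q.2, q.1) then -1 else 0) else (if e = q then 1 else 0)

lemma netout_toggle (f : V × V → ℤ) (q : V × V) (w : V) :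
    netout (toggle f q) w = (if w = q.1 then 1 else 0) - (if w = q.2 then 1 else 0) := by
  by_cases hpos : 0 < f (q.2, q.1)
  · have hfun : toggle f q
        = fun e => -((fun e => if e = (q.2, q.1) then (1:ℤ) else 0) e) := by
      funext e
      simp only [toggle, if_pos hpos]
      split <;> norm_num
    rw [hfun, netout_neg, netout_single]
    ring
  · have hfun : toggle f q = fun e => if e = (q.1, q.2) then (1:ℤ) else 0 := by
      funext e
      simp only [toggle, if_neg hpos]
    rw [hfun, netout_single]

/-- Augmenting a flow along a residual path. -/
lemma augment_step {f : V × V → ℤ} (hf : IsFlow Adj x y f) (hxy : x ≠ y)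
    {p : List V} (hne : p ≠ []) (hch : p.Chain' (Res Adj f))
    (hhd : p.head? = some x) (hlt : p.getLast? = some y) (hnd : p.Nodup) :
    ∃ f', IsFlow Adj x y f' ∧ netout f' x = netout f x + 1 := by
  set L := pathEdges p with hL
  set f' : V × V → ℤ := fun e => f e + (L.map (fun q => toggle f q e)).sum with hf'
  obtain ⟨a, t, rfl⟩ := List.exists_cons_of_ne_nil hne
  have ha : a = x := by simpa using hhd
  subst ha
  have hlast : (a :: t).getLast (List.cons_ne_nil a t) = y := by
    rwa [List.getLast?_eq_getLast (List.cons_ne_nil a t), Option.some_inj] at hlt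
  have hnet : ∀ w, netout f' w = netout f w
      + ((if w = a then 1 else 0) - (if w = y then 1 else 0)) := by
    intro w
    rw [hf', netout_add, netout_list_sum]
    congr 1
    have : (L.map fun q => netout (toggle f q) w)
        = L.map (fun q => (fun u => if w = u then (1:ℤ) else 0) q.1
            - (fun u => if w = u then (1:ℤ) else 0) q.2) := by
      apply List.map_congr_left
      intro q _
      exact netout_toggle f q w
    rw [this, hL, telescope (fun u => if w = u then (1:ℤ) else 0) t a, hlast]
  have hcap : ∀ e, 0 ≤ f' e ∧ f' e ≤ cap Adj e := by
    intro e
    have hterm : ∀ q ∈ L, q ≠ e → q ≠ (e.2, e.1) → toggle f q e = 0 := by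
      intro q hq hq1 hq2
      unfold toggle
      split
      · rw [if_neg]
        intro h
        apply hq2
        subst h
        simp
      · rw [if_neg (fun h => hq1 h.symm)]
    have hLnd : L.Nodup := pathEdges_nodup hnd
    by_cases he : e ∈ L
    · have he' : (e.1, e.2) ∈ pathEdges (a :: t) := by simpa using he
      have hne12 : e.1 ≠ e.2 := ne_of_mem_pathEdges hnd he'
      have hsw : (e.2, e.1) ∉ L := not_mem_pathEdges_swap hnd he'
      have hs : (L.map (fun q => toggle f q e)).sum = toggle f e e := by
        rw [list_sum_eq_single L hLnd _ e, if_pos he]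
        intro q hq hq'
        refine hterm q hq hq' (fun h => ?_)
        exact hsw (h ▸ hq)
      rw [hf']
      simp only [hs]
      by_cases hpos : 0 < f (e.2, e.1)
      · have ht0 : toggle f e e = 0 := by
          unfold toggle
          rw [if_pos hpos, if_neg]
          exact fun h => hne12 (congrArg Prod.fst h)
        rw [ht0, add_zero]
        exact hf.1 e
      · have ht : toggle f e e = 1 := by
          unfold toggle
          rw [if_neg hpos, if_pos rfl]
        have hres : Res Adj f e.1 e.2 := chain'_of_pathEdges hch (e.1, e.2) he'
        have hlt' : f e < cap Adj e := by
          rcases hres with ⟨_, h⟩ | h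
          · simpa using h
          · exact absurd h hpos
        have h0 := (hf.1 e).1
        constructor <;> omega
    · by_cases hsw : (e.2, e.1) ∈ L
      · have hne12 : e.2 ≠ e.1 := ne_of_mem_pathEdges hnd (by simpa using hsw)
        have hs : (L.map (fun q => toggle f q e)).sum = toggle f (e.2, e.1) e := by
          rw [list_sum_eq_single L hLnd _ (e.2, e.1), if_pos hsw]
          intro q hq hq'
          exact hterm q hq (fun h => he (h ▸ hq)) hq'
        rw [hf']
        simp only [hs]
        have htog : toggle f (e.2, e.1) e = if 0 < f e then -1 else 0 := by
          unfold toggle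
          by_cases hpos : 0 < f e
          · rw [if_pos hpos, if_pos Prod.mk.eta.symm, if_pos hpos]
          · rw [if_neg hpos, if_neg (fun h => hne12 (congrArg Prod.fst h).symm),
              if_neg hpos]
        rw [htog]
        by_cases hpos : 0 < f e
        · rw [if_pos hpos]
          have h1 := (hf.1 e).2
          have h0 := cap_nonneg Adj e
          constructor <;> omega
        · rw [if_neg hpos, add_zero]
          exact hf.1 e
      · have hs : (L.map (fun q => toggle f q e)).sum = 0 := by
          rw [List.sum_eq_zero]
          intro z hz
          rw [List.mem_map] at hz
          obtain ⟨q, hq, rfl⟩ := hz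
          exact hterm q hq (fun h => he (h ▸ hq)) (fun h => hsw (h ▸ hq))
        rw [hf']
        simp only [hs, add_zero]
        exact hf.1 e
  refine ⟨f', ⟨hcap, fun w hwx hwy => ?_⟩, ?_⟩
  · rw [hnet w, hf.2 w hwx hwy, if_neg hwx, if_neg hwy]
    ring
  · rw [hnet a, if_pos rfl, if_neg hxy]
    ring

lemma flow_eq_cap_of_cut {f : V × V → ℤ} (hf : IsFlow Adj x y f) {S : Finset V}
    (hx : x ∈ S) (hy : y ∉ S)
    (hres : ∀ e : V × V, e.1 ∈ S → e.2 ∉ S → ¬ Res Adj f e.1 e.2) :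
    netout f x = ((Finset.univ.filter
      fun e : V × V => Adj e.1 e.2 ∧ e.1 ∈ S ∧ e.2 ∉ S).card : ℤ) := by
  rw [value_eq_cut Adj x y hf hx hy]
  have hout : ∀ e ∈ Finset.univ.filter (fun e : V × V => e.1 ∈ S ∧ e.2 ∉ S),
      f e = cap Adj e := by
    intro e he
    rw [Finset.mem_filter] at he
    have h := hres e he.2.1 he.2.2
    unfold Res at h
    push_neg at h
    obtain ⟨h1, _⟩ := h
    have hb := hf.1 e
    by_cases hA : Adj e.1 e.2
    · have := h1 hA
      have : cap Adj e ≤ f e := not_lt.mp (fun hlt => absurd hlt (by simpa using h1 hA))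
      omega
    · have : cap Adj e = 0 := by simp [cap, hA]
      omega
  have hin : ∀ e ∈ Finset.univ.filter (fun e : V × V => e.1 ∉ S ∧ e.2 ∈ S),
      f e = 0 := by
    intro e he
    rw [Finset.mem_filter] at he
    have h := hres (e.2, e.1) he.2.2 he.2.1
    unfold Res at h
    push_neg at h
    have hb := hf.1 e
    have := h.2
    simp only [Prod.mk.eta] at this
    omega
  rw [Finset.sum_congr rfl hout, Finset.sum_eq_zero hin, sub_zero]
  have hsplit : (Finset.univ.filter (fun e : V × V => e.1 ∈ S ∧ e.2 ∉ S)).filter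
      (fun e => Adj e.1 e.2)
      = Finset.univ.filter (fun e : V × V => Adj e.1 e.2 ∧ e.1 ∈ S ∧ e.2 ∉ S) := by
    rw [Finset.filter_filter]
    ext e
    simp only [Finset.mem_filter]
    tauto
  rw [show (∑ e ∈ Finset.univ.filter (fun e : V × V => e.1 ∈ S ∧ e.2 ∉ S), cap Adj e)
      = ∑ e ∈ Finset.univ.filter (fun e : V × V => e.1 ∈ S ∧ e.2 ∉ S),
        (if Adj e.1 e.2 then (1:ℤ) else 0) from rfl,
    Finset.sum_boole, hsplit]

lemma exists_flow (hxy : x ≠ y) (k : ℕ)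
    (H : ∀ S : Finset V, x ∈ S → y ∉ S →
      k ≤ (Finset.univ.filter
        fun e : V × V => Adj e.1 e.2 ∧ e.1 ∈ S ∧ e.2 ∉ S).card) :
    ∀ n, n ≤ k → ∃ f, IsFlow Adj x y f ∧ netout f x = n := by
  intro n
  induction n with
  | zero =>
    intro _
    exact ⟨fun _ => 0, ⟨fun e => ⟨le_rfl, cap_nonneg Adj e⟩, fun w _ _ => netout_zero w⟩,
      by simpa using netout_zero x⟩
  | succ n ih =>
    intro hnk
    obtain ⟨f, hf, hval⟩ := ih (le_of_lt hnk)
    have hreach : Relation.ReflTransGen (Res Adj f) x y := by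
      by_contra hnr
      classical
      set S : Finset V :=
        Finset.univ.filter (fun v => Relation.ReflTransGen (Res Adj f) x v) with hS
      have hxS : x ∈ S := by simp [hS, Relation.ReflTransGen.refl]
      have hyS : y ∉ S := by simp [hS, hnr]
      have hres : ∀ e : V × V, e.1 ∈ S → e.2 ∉ S → ¬ Res Adj f e.1 e.2 := by
        intro e he1 he2 hr
        rw [hS, Finset.mem_filter] at he1 he2
        exact he2 ⟨Finset.mem_univ _, he1.2.tail hr⟩
      have := flow_eq_cap_of_cut Adj x y hf hxS hyS hres
      have hcard := H S hxS hyS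
      rw [hval] at this
      have : (n : ℤ) ≥ (k : ℤ) := by
        rw [this]
        exact_mod_cast hcard
      have : k ≤ n := by exact_mod_cast this
      omega
    obtain ⟨p, hne, hch, hhd, hlt, hnd⟩ := exists_nodup_chain hreach
    obtain ⟨f', hf', hval'⟩ := augment_step Adj x y hf hxy hne hch hhd hlt hnd
    exact ⟨f', hf', by rw [hval', hval]; push_cast; ring⟩

lemma exists_path_of_pos (hxy : x ≠ y) {f : V × V → ℤ} (hf : IsFlow Adj x y f)
    (hv : 0 < netout f x) :
    ∃ p : List V, p ≠ [] ∧ p.Chain' (fun u v => 0 < f (u, v)) ∧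
      p.head? = some x ∧ p.getLast? = some y ∧ p.Nodup := by
  have hreach : Relation.ReflTransGen (fun u v => 0 < f (u, v)) x y := by
    by_contra hnr
    classical
    set S : Finset V :=
      Finset.univ.filter (fun v => Relation.ReflTransGen (fun u v => 0 < f (u, v)) x v)
      with hS
    have hxS : x ∈ S := by simp [hS, Relation.ReflTransGen.refl]
    have hyS : y ∉ S := by simp [hS, hnr]
    have hcut := value_eq_cut Adj x y hf hxS hyS
    have hout : ∀ e ∈ Finset.univ.filter (fun e : V × V => e.1 ∈ S ∧ e.2 ∉ S),
        f e = 0 := by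
      intro e he
      rw [Finset.mem_filter] at he
      have h1 := he.2.1
      have h2 := he.2.2
      rw [hS, Finset.mem_filter] at h1 h2
      have : ¬ 0 < f (e.1, e.2) := fun hpos =>
        h2 ⟨Finset.mem_univ _, h1.2.tail hpos⟩
      have := (hf.1 e).1
      simp only [Prod.mk.eta] at *
      omega
    have hin : 0 ≤ ∑ e ∈ Finset.univ.filter (fun e : V × V => e.1 ∉ S ∧ e.2 ∈ S), f e :=
      Finset.sum_nonneg (fun e _ => (hf.1 e).1)
    rw [Finset.sum_eq_zero hout] at hcut
    omega
  obtain ⟨p, hne, hch, hhd, hlt, hnd⟩ := exists_nodup_chain hreach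
  exact ⟨p, hne, hch, hhd, hlt, hnd⟩

lemma decompose (hxy : x ≠ y) :
    ∀ (n : ℕ) (f : V × V → ℤ), IsFlow Adj x y f → netout f x = n →
    ∃ p : Fin n → List V,
      (∀ i, IsDiPath Adj x y (p i) ∧ ∀ q ∈ pathEdges (p i), 0 < f q) ∧
      ∀ i j, i ≠ j → List.Disjoint (pathEdges (p i)) (pathEdges (p j)) := by
  intro n
  induction n with
  | zero =>
    intro f _ _
    exact ⟨fun i => i.elim0, fun i => i.elim0, fun i => i.elim0⟩
  | succ n ih =>
    intro f hf hval
    have hv : 0 < netout f x := by rw [hval]; positivity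
    obtain ⟨p₀, hne, hch, hhd, hlt, hnd⟩ := exists_path_of_pos Adj x y hxy hf hv
    set L₀ := pathEdges p₀ with hL₀
    have hL₀nd : L₀.Nodup := pathEdges_nodup hnd
    have hL₀pos : ∀ q ∈ L₀, 0 < f q := by
      intro q hq
      have := chain'_of_pathEdges hch q hq
      simpa using this
    set f₂ : V × V → ℤ :=
      fun e => f e - (L₀.map (fun q => if e = q then (1:ℤ) else 0)).sum with hf₂
    have hf₂e : ∀ e, f₂ e = f e - (if e ∈ L₀ then 1 else 0) := by
      intro e
      have h1 := list_sum_eq_single L₀ hL₀nd (fun q => if e = q then (1:ℤ) else 0) e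
        (fun q _ hq' => if_neg (fun h => hq' h.symm))
      simp only [hf₂]
      rw [h1]
      simp
    have hnet : ∀ w, netout f₂ w = netout f w
        - ((if w = x then 1 else 0) - (if w = y then 1 else 0)) := by
      intro w
      rw [hf₂, netout_sub, netout_list_sum]
      congr 1
      obtain ⟨a, t, rfl⟩ := List.exists_cons_of_ne_nil hne
      have ha : a = x := by simpa using hhd
      subst ha
      have hlast : (a :: t).getLast (List.cons_ne_nil a t) = y := by
        rwa [List.getLast?_eq_getLast (List.cons_ne_nil a t), Option.some_inj] at hlt
      have hmc : (L₀.map fun q => netout (fun e => if e = q then (1:ℤ) else 0) w)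
          = L₀.map (fun q => (fun u => if w = u then (1:ℤ) else 0) q.1
              - (fun u => if w = u then (1:ℤ) else 0) q.2) := by
        apply List.map_congr_left
        intro q _
        exact netout_single q.1 q.2 w
      rw [hmc, hL₀, telescope (fun u => if w = u then (1:ℤ) else 0) t a, hlast]
    have hf₂flow : IsFlow Adj x y f₂ := by
      refine ⟨fun e => ?_, fun w hwx hwy => ?_⟩
      · rw [hf₂e e]
        have hb := hf.1 e
        by_cases he : e ∈ L₀
        · have := hL₀pos e he
          rw [if_pos he]
          constructor <;> omega
        · rw [if_neg he]
          simpa using hb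
      · rw [hnet w, hf.2 w hwx hwy, if_neg hwx, if_neg hwy]
        ring
    have hval₂ : netout f₂ x = n := by
      rw [hnet x, hval, if_pos rfl, if_neg hxy]
      push_cast
      ring
    obtain ⟨ps, hps, hpsd⟩ := ih f₂ hf₂flow hval₂
    have hsub : ∀ q, 0 < f₂ q → 0 < f q := by
      intro q hq
      rw [hf₂e q] at hq
      split at hq <;> omega
    have hnotL₀ : ∀ q, 0 < f₂ q → q ∉ L₀ := by
      intro q hq hmem
      rw [hf₂e q, if_pos hmem] at hq
      have := (hf.1 q).2
      have := cap_le_one Adj q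
      omega
    have hp₀path : IsDiPath Adj x y p₀ := by
      refine ⟨hne, ?_, hhd, hlt, hnd⟩
      refine hch.imp (fun u v h => ?_)
      by_contra hA
      have h1 : cap Adj (u, v) = 0 := by simp [cap, hA]
      have := (hf.1 (u, v)).2
      omega
    refine ⟨Fin.cons p₀ ps, fun i => ?_, fun i j hij => ?_⟩
    · refine Fin.cases ?_ (fun i' => ?_) i
      · rw [Fin.cons_zero]
        exact ⟨hp₀path, hL₀pos⟩
      · rw [Fin.cons_succ]
        exact ⟨(hps i').1, fun q hq => hsub q ((hps i').2 q hq)⟩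
    · have key : ∀ j' : Fin n, List.Disjoint L₀ (pathEdges (ps j')) := by
        intro j' a ha haj
        exact hnotL₀ a ((hps j').2 a haj) ha
      revert hij
      refine Fin.cases ?_ (fun i' => ?_) i
      · refine Fin.cases ?_ (fun j' => ?_) j
        · intro hij
          exact absurd rfl hij
        · intro _
          rw [Fin.cons_zero, Fin.cons_succ]
          exact key j'
      · refine Fin.cases ?_ (fun j' => ?_) j
        · intro _
          rw [Fin.cons_succ, Fin.cons_zero]
          exact List.disjoint_symm (key i')
        · intro hij
          rw [Fin.cons_succ, Fin.cons_succ]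
          exact hpsd i' j' (fun h => hij (congrArg Fin.succ h))

lemma exists_crossing (S : Finset V) :
    ∀ (p : List V), p.Chain' Adj → ∀ u v : V, p.head? = some u → p.getLast? = some v →
      u ∈ S → v ∉ S → ∃ q ∈ pathEdges p, Adj q.1 q.2 ∧ q.1 ∈ S ∧ q.2 ∉ S
  | [] => by simp
  | [a] => by
    intro _ u v hu hv huS hvS
    simp only [List.head?_cons, Option.some_inj] at hu
    simp only [List.getLast?_singleton, Option.some_inj] at hv
    subst hu
    subst hv
    exact absurd huS hvS
  | a :: b :: t => by
    intro hc u v hu hv huS hvS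
    simp only [List.head?_cons, Option.some_inj] at hu
    subst hu
    rw [List.Chain', List.isChain_cons_cons] at hc
    by_cases hb : b ∈ S
    · obtain ⟨q, hq, hprop⟩ := exists_crossing S (b :: t) hc.2 b v rfl
        (by rwa [List.getLast?_cons_cons] at hv) hb hvS
      exact ⟨q, by rw [pathEdges_cons_cons]; exact List.mem_cons_of_mem _ hq, hprop⟩
    · exact ⟨(a, b), by rw [pathEdges_cons_cons]; exact List.mem_cons_self,
        hc.1, huS, hb⟩

end flow
end Stmt17

/-- edge version of Menger's theorem, local-cut form: In a finite digraph,
if every set `S` with `x ∈ S`, `y ∉ S` has `|E(S, V∖S)| ≥ k`, then there are `k` pairwise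
edge-disjoint paths from `x` to `y`.  Conversely, if some `S` with `x ∈ S`, `y ∉ S` has
`|E(S, V∖S)| ≤ k - 1`, then there is no family of `k` pairwise edge-disjoint `x → y`
paths (i.e. there are at most `k - 1` of them). -/
theorem stmt17 {V : Type*} [Fintype V] [DecidableEq V]
    (Adj : V → V → Prop) [DecidableRel Adj]
    (x y : V) (k : ℕ) (hk : 1 ≤ k) :
    ((∀ S : Finset V, x ∈ S → y ∉ S →
        k ≤ (Finset.univ.filter
          fun e : V × V => Adj e.1 e.2 ∧ e.1 ∈ S ∧ e.2 ∉ S).card) →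
      ∃ p : Fin k → List V, (∀ i, IsDiPath Adj x y (p i)) ∧
        ∀ i j, i ≠ j → List.Disjoint (pathEdges (p i)) (pathEdges (p j)))
    ∧ (∀ S : Finset V, x ∈ S → y ∉ S →
        (Finset.univ.filter
          fun e : V × V => Adj e.1 e.2 ∧ e.1 ∈ S ∧ e.2 ∉ S).card ≤ k - 1 →
        ¬ ∃ p : Fin k → List V, (∀ i, IsDiPath Adj x y (p i)) ∧
          ∀ i j, i ≠ j → List.Disjoint (pathEdges (p i)) (pathEdges (p j))) := by
  constructor
  · intro H
    by_cases hxy : x = y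
    · subst hxy
      refine ⟨fun _ => [x], fun i => ⟨List.cons_ne_nil x [], List.isChain_singleton x,
        rfl, rfl, List.nodup_singleton x⟩, fun i j _ => ?_⟩
      show List.Disjoint (pathEdges [x]) (pathEdges [x])
      simp [pathEdges, List.Disjoint]
    · obtain ⟨f, hf, hval⟩ := Stmt17.exists_flow Adj x y hxy k H k le_rfl
      obtain ⟨p, hp, hd⟩ := Stmt17.decompose Adj x y hxy k f hf hval
      exact ⟨p, fun i => (hp i).1, hd⟩
  · rintro S hxS hyS hcard ⟨p, hp, hd⟩
    classical
    choose g hg1 hg2 using fun i : Fin k =>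
      Stmt17.exists_crossing Adj S (p i) (hp i).2.1 x y (hp i).2.2.1
        (hp i).2.2.2.1 hxS hyS
    have hginj : Function.Injective g := by
      intro i j hij
      by_contra hne
      exact hd i j hne (hg1 i) (hij ▸ hg1 j)
    have hmem : ∀ i ∈ (Finset.univ : Finset (Fin k)),
        g i ∈ Finset.univ.filter
          (fun e : V × V => Adj e.1 e.2 ∧ e.1 ∈ S ∧ e.2 ∉ S) :=
      fun i _ => Finset.mem_filter.mpr ⟨Finset.mem_univ _, hg2 i⟩
    have hle := Finset.card_le_card_of_injOn g hmem hginj.injOn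
    rw [Finset.card_univ, Fintype.card_fin] at hle
    omega
end
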